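/- Let $\mathcal{H}$ be a real Hilbert space, $A:\mathcal{H}\rightrightarrows\mathcal{H}$ maximally monotone, $D:\mathcal{H}\to\mathcal{H}$ monotone and $\eta^{-1}$-Lipschitz, $B:\mathcal{H}\to\mathcal{H}$ monotone and $\mu^{-1}$-Lipschitz with $M=\operatorname{zer}B\neq\emptyset$. Given $x_{n-1},x_n\in\mathcal{H}$, $\lambda_n,\beta_n>0$, $\alpha_n\geq 0$, define $p_n=J_{\lambda_n A}(x_n-\lambda_n Dx_n-\lambda_n\beta_n Bx_n+\alpha_n(x_n-x_{n-1}))$ and $x_{n+1}=\lambda_n\beta_n(Bx_n-Bp_n)+\lambda_n(Dx_n-Dp_n)+p_n$. Then for every $(u,w)\in\operatorname{gr}(A+D+N_M)$ with $w=v+p+Du$, $v\in Au$, $p\in N_M(u)$: $\|x_{n+1}-u\|^2-\|x_n-u\|^2\leq\alpha_n(\|x_n-u\|^2-\|x_{n-1}-u\|^2)+2\alpha_n\|x_n-x_{n-1}\|^2-[1-(\lambda_n\beta_n/\mu+\lambda_n/\eta)^2-\alpha_n]\|x_n-p_n\|^2+2\lambda_n\beta_n[\sup_{u'\in M}\varphi_B(u',p/\beta_n)-\sigma_M(p/\beta_n)]+2\lambda_n\langle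 u-p_n,w\rangle$. -/

import Mathlib

open scoped RealInnerProductSpace

section
variable {H : Type*} [NormedAddCommGroup H] [InnerProductSpace ℝ H]

/-- A set-valued operator is maximally monotone. -/
def IsMaximallyMonotone (A : H → Set H) : Prop :=
  (∀ ⦃x u y v : H⦄, u ∈ A x → v ∈ A y → (0 : ℝ) ≤ ⟪x - y, u - v⟫) ∧
    ∀ x u : H, (∀ y v : H, v ∈ A y → (0 : ℝ) ≤ ⟪x - y, u - v⟫) → u ∈ A x

/-- The Fitzpatrick function of a single-valued operator. -/
noncomputable def fitzpatrickFn (B : H → H) (x u : H) : EReal :=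
  ⨆ y : H, ((⟪x, B y⟫ + ⟪y, u⟫ - ⟪y, B y⟫ : ℝ) : EReal)

/-- The support function of a set, with values in the extended reals. -/
noncomputable def suppFn (M : Set H) (u : H) : EReal :=
  ⨆ y : M, (((⟪(y : H), u⟫ : ℝ)) : EReal)

/-- The normal cone to a set `M` at `x`. -/
def normalCone (M : Set H) (x : H) : Set H :=
  {u : H | x ∈ M ∧ ∀ y ∈ M, ⟪u, y - x⟫ ≤ (0 : ℝ)}

end

section Aux
variable {H : Type*} [NormedAddCommGroup H] [InnerProductSpace ℝ H]

private lemma quad_aux (a b c : H) :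
    ‖a + c‖^2 = ‖b + c‖^2 - ‖b‖^2 + ‖a‖^2 + 2*⟪c, a - b⟫ := by
  rw [norm_add_sq_real, norm_add_sq_real, inner_sub_right]
  have h1 := real_inner_comm a c
  have h2 := real_inner_comm b c
  ring_nf
  linarith

end Aux

set_option maxHeartbeats 1000000 in
/-- The central one-step estimate (Lemma 3) for the inertial
forward-backward-forward penalty algorithm. -/
theorem fbf_inertial_one_step_estimate {H : Type*} [NormedAddCommGroup H]
    [InnerProductSpace ℝ H] [CompleteSpace H]
    (A : H → Set H) (hA : IsMaximallyMonotone A)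
    (D : H → H) (η : ℝ) (hη : 0 < η)
    (hDmon : ∀ x y : H, (0 : ℝ) ≤ ⟪x - y, D x - D y⟫)
    (hDlip : ∀ x y : H, ‖D x - D y‖ ≤ η⁻¹ * ‖x - y‖)
    (B : H → H) (μ : ℝ) (hμ : 0 < μ)
    (hBmon : ∀ x y : H, (0 : ℝ) ≤ ⟪x - y, B x - B y⟫)
    (hBlip : ∀ x y : H, ‖B x - B y‖ ≤ μ⁻¹ * ‖x - y‖)
    (M : Set H) (hM : M = {x : H | B x = 0}) (hMne : M.Nonempty)
    (xm xn : H) (lam βn αn : ℝ) (hlam : 0 < lam) (hβn : 0 < βn) (hαn : 0 ≤ αn)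
    (pn : H)
    (hpn : ∃ a ∈ A pn,
      (xn - lam • D xn - (lam * βn) • B xn + αn • (xn - xm)) - pn = lam • a)
    (xnext : H)
    (hxnext : xnext = (lam * βn) • (B xn - B pn) + lam • (D xn - D pn) + pn)
    (u v p w : H) (hv : v ∈ A u) (hp : p ∈ normalCone M u) (hw : w = v + p + D u) :
    ((‖xnext - u‖ ^ 2 - ‖xn - u‖ ^ 2 : ℝ) : EReal) ≤
      ((αn * (‖xn - u‖ ^ 2 - ‖xm - u‖ ^ 2) + 2 * αn * ‖xn - xm‖ ^ 2 -
          (1 - (lam * βn / μ + lam / η) ^ 2 - αn) * ‖xn - pn‖ ^ 2 +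
          2 * lam * ⟪u - pn, w⟫ : ℝ) : EReal) +
        ((2 * lam * βn : ℝ) : EReal) *
          ((⨆ u' : M, fitzpatrickFn B (u' : H) (βn⁻¹ • p)) - suppFn M (βn⁻¹ • p)) := by
  obtain ⟨a, ha, haeq⟩ := hpn
  have hu : u ∈ M := hp.1
  set R : ℝ := αn * (‖xn - u‖ ^ 2 - ‖xm - u‖ ^ 2) + 2 * αn * ‖xn - xm‖ ^ 2 -
      (1 - (lam * βn / μ + lam / η) ^ 2 - αn) * ‖xn - pn‖ ^ 2 +
      2 * lam * ⟪u - pn, w⟫ with hR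
  -- Step 1: the real inequality
  have hreal0 : ‖xnext - u‖ ^ 2 - ‖xn - u‖ ^ 2 ≤
      R + (2 * lam * βn * ⟪u - pn, B pn⟫ + 2 * lam * ⟪pn - u, p⟫) := by
    -- geometric identity
    have hid : ‖xnext - u‖ ^ 2 = ‖xn - u‖ ^ 2 - ‖xn - pn‖ ^ 2 + ‖xnext - pn‖ ^ 2
        + 2 * ⟪pn - u, xnext - xn⟫ := by
      have := quad_aux (xnext - pn) (xn - pn) (pn - u)
      have e1 : xnext - pn + (pn - u) = xnext - u := by abel
      have e2 : xn - pn + (pn - u) = xn - u := by abel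
      have e3 : xnext - pn - (xn - pn) = xnext - xn := by abel
      rw [e1, e2, e3] at this
      linarith
    -- form of xnext - xn
    have hxx : xnext - xn = αn • (xn - xm) - lam • a - (lam * βn) • B pn - lam • D pn := by
      have hla : lam • a = (xn - lam • D xn - (lam * βn) • B xn + αn • (xn - xm)) - pn :=
        haeq.symm
      rw [hxnext, hla]
      module
    -- error norm bound
    have herr : ‖xnext - pn‖ ^ 2 ≤ (lam * βn / μ + lam / η) ^ 2 * ‖xn - pn‖ ^ 2 := by
      have h1 : ‖xnext - pn‖ ≤ (lam * βn / μ + lam / η) * ‖xn - pn‖ := by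
        have : xnext - pn = (lam * βn) • (B xn - B pn) + lam • (D xn - D pn) := by
          rw [hxnext]; abel
        rw [this]
        calc ‖(lam * βn) • (B xn - B pn) + lam • (D xn - D pn)‖
            ≤ ‖(lam * βn) • (B xn - B pn)‖ + ‖lam • (D xn - D pn)‖ := norm_add_le _ _
          _ = (lam * βn) * ‖B xn - B pn‖ + lam * ‖D xn - D pn‖ := by
              rw [norm_smul, norm_smul, Real.norm_eq_abs, Real.norm_eq_abs,
                abs_of_pos (by positivity), abs_of_pos hlam]
          _ ≤ (lam * βn) * (μ⁻¹ * ‖xn - pn‖) + lam * (η⁻¹ * ‖xn - pn‖) :=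
              add_le_add (mul_le_mul_of_nonneg_left (hBlip xn pn) (by positivity))
                (mul_le_mul_of_nonneg_left (hDlip xn pn) hlam.le)
          _ = (lam * βn / μ + lam / η) * ‖xn - pn‖ := by field_simp
      have hnn : (0:ℝ) ≤ (lam * βn / μ + lam / η) * ‖xn - pn‖ := by positivity
      calc ‖xnext - pn‖ ^ 2 ≤ ((lam * βn / μ + lam / η) * ‖xn - pn‖) ^ 2 := by
            exact pow_le_pow_left₀ (norm_nonneg _) h1 2
        _ = (lam * βn / μ + lam / η) ^ 2 * ‖xn - pn‖ ^ 2 := by ring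
    -- expand the inner product term
    have hinner : ⟪pn - u, xnext - xn⟫ = αn * ⟪pn - u, xn - xm⟫ - lam * ⟪pn - u, a⟫
        - (lam * βn) * ⟪pn - u, B pn⟫ - lam * ⟪pn - u, D pn⟫ := by
      rw [hxx]
      simp only [inner_sub_right, inner_smul_right]
      try ring
    -- monotonicity
    have hAm : (0:ℝ) ≤ ⟪pn - u, a - v⟫ := hA.1 ha hv
    have hDm : (0:ℝ) ≤ ⟪pn - u, D pn - D u⟫ := hDmon pn u
    -- decomposition of a + D pn
    have hdec : ⟪pn - u, a⟫ + ⟪pn - u, D pn⟫ =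
        ⟪pn - u, a - v⟫ + ⟪pn - u, D pn - D u⟫ + ⟪pn - u, w⟫ - ⟪pn - u, p⟫ := by
      have : (⟪pn - u, w⟫ : ℝ) = ⟪pn - u, v⟫ + ⟪pn - u, p⟫ + ⟪pn - u, D u⟫ := by
        rw [hw]; simp [inner_add_right]
      simp only [inner_sub_right]
      linarith
    -- inertial bounds
    have hin1 : 2 * ⟪pn - xn, xn - xm⟫ ≤ ‖pn - xn‖ ^ 2 + ‖xn - xm‖ ^ 2 := by
      have h := norm_sub_sq_real (pn - xn) (xn - xm)
      nlinarith [sq_nonneg ‖pn - xn - (xn - xm)‖]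
    have hin2 : 2 * ⟪xn - u, xn - xm⟫ = ‖xn - u‖ ^ 2 + ‖xn - xm‖ ^ 2 - ‖xm - u‖ ^ 2 := by
      have h := norm_sub_sq_real (xn - u) (xn - xm)
      have e : xn - u - (xn - xm) = xm - u := by abel
      rw [e] at h
      linarith
    have hsplit : (⟪pn - u, xn - xm⟫ : ℝ) = ⟪pn - xn, xn - xm⟫ + ⟪xn - u, xn - xm⟫ := by
      have : pn - u = (pn - xn) + (xn - u) := by abel
      rw [this, inner_add_left]
    -- norm symmetry
    have hns : ‖pn - xn‖ = ‖xn - pn‖ := norm_sub_rev _ _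
    have hwsym : lam * (⟪pn - u, w⟫ : ℝ) = -(lam * ⟪u - pn, w⟫) := by
      have : (⟪pn - u, w⟫ : ℝ) = - ⟪u - pn, w⟫ := by
        rw [← inner_neg_left]; congr 1; abel
      rw [this]; ring
    -- combine
    have hBsym : (⟪u - pn, B pn⟫ : ℝ) = - ⟪pn - u, B pn⟫ := by
      rw [← inner_neg_left]; congr 1; abel
    rw [hns] at hin1
    have h1 : 2 * αn * ⟪pn - xn, xn - xm⟫ ≤ αn * ‖xn - pn‖ ^ 2 + αn * ‖xn - xm‖ ^ 2 := by
      nlinarith [mul_le_mul_of_nonneg_left hin1 hαn]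
    have h2 : 2 * αn * ⟪xn - u, xn - xm⟫
        = αn * (‖xn - u‖ ^ 2 + ‖xn - xm‖ ^ 2 - ‖xm - u‖ ^ 2) := by
      linear_combination αn * hin2
    have h3 : αn * ⟪pn - u, xn - xm⟫
        = αn * ⟪pn - xn, xn - xm⟫ + αn * ⟪xn - u, xn - xm⟫ := by rw [hsplit]; ring
    have h4 : lam * ⟪pn - u, a⟫ + lam * ⟪pn - u, D pn⟫
        = lam * ⟪pn - u, a - v⟫ + lam * ⟪pn - u, D pn - D u⟫
          + lam * ⟪pn - u, w⟫ - lam * ⟪pn - u, p⟫ := by linear_combination lam * hdec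
    have h5 : (0:ℝ) ≤ lam * ⟪pn - u, a - v⟫ := mul_nonneg hlam.le hAm
    have h6 : (0:ℝ) ≤ lam * ⟪pn - u, D pn - D u⟫ := mul_nonneg hlam.le hDm
    have h7 : 2 * lam * βn * ⟪u - pn, B pn⟫ = -(2 * (lam * βn) * ⟪pn - u, B pn⟫) := by
      rw [hBsym]; ring
    rw [hR, hid, hinner]
    linarith [herr]
  have hreal : ‖xnext - u‖ ^ 2 - ‖xn - u‖ ^ 2 ≤
      R + 2 * lam * βn * (⟪u - pn, B pn⟫ + βn⁻¹ * ⟪pn - u, p⟫) := by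
    have hKval : 2 * lam * βn * (⟪u - pn, B pn⟫ + βn⁻¹ * (⟪pn - u, p⟫ : ℝ))
        = 2 * lam * βn * ⟪u - pn, B pn⟫ + 2 * lam * ⟪pn - u, p⟫ := by
      field_simp
    rw [hKval]; exact hreal0
  set K : ℝ := ⟪u - pn, B pn⟫ + βn⁻¹ * ⟪pn - u, p⟫ with hK
  -- Step 2: EReal part
  set q : H := βn⁻¹ • p with hq
  set S : EReal := ⨆ u' : M, fitzpatrickFn B (u' : H) q with hS
  have hσ : suppFn M q = ((⟪u, q⟫ : ℝ) : EReal) := by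
    apply le_antisymm
    · refine iSup_le fun y => ?_
      refine EReal.coe_le_coe_iff.mpr ?_
      have hy := hp.2 y y.2
      have hyp : (⟪(y : H) - u, p⟫ : ℝ) ≤ 0 := by
        rw [real_inner_comm]; exact hy
      have : (⟪(y : H), q⟫ : ℝ) - ⟪u, q⟫ = βn⁻¹ * ⟪(y : H) - u, p⟫ := by
        rw [hq]; simp [inner_smul_right, inner_sub_left]; ring
      nlinarith [inv_pos.mpr hβn]
    · exact le_iSup (fun y : M => (((⟪(y : H), q⟫ : ℝ)) : EReal)) ⟨u, hu⟩
  have hSlb : ((⟪u, B pn⟫ + ⟪pn, q⟫ - ⟪pn, B pn⟫ : ℝ) : EReal) ≤ S := by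
    calc ((⟪u, B pn⟫ + ⟪pn, q⟫ - ⟪pn, B pn⟫ : ℝ) : EReal)
        ≤ fitzpatrickFn B u q :=
          le_iSup (fun y : H => ((⟪u, B y⟫ + ⟪y, q⟫ - ⟪y, B y⟫ : ℝ) : EReal)) pn
      _ ≤ S := le_iSup (fun u' : M => fitzpatrickFn B (u' : H) q) ⟨u, hu⟩
  have hKle : ((K : ℝ) : EReal) ≤ S - suppFn M q := by
    have hKeq : (K : ℝ) = (⟪u, B pn⟫ + ⟪pn, q⟫ - ⟪pn, B pn⟫) - ⟪u, q⟫ := by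
      rw [hK, hq]
      simp only [inner_sub_left, inner_smul_right]
      ring
    rw [hσ, hKeq, EReal.coe_sub]
    exact EReal.sub_le_sub hSlb le_rfl
  have hmul : ((2 * lam * βn : ℝ) : EReal) * ((K : ℝ) : EReal) ≤
      ((2 * lam * βn : ℝ) : EReal) * (S - suppFn M q) := by
    apply mul_le_mul_of_nonneg_left hKle
    exact_mod_cast (by positivity : (0:ℝ) ≤ 2 * lam * βn)
  calc ((‖xnext - u‖ ^ 2 - ‖xn - u‖ ^ 2 : ℝ) : EReal)
      ≤ ((R + 2 * lam * βn * K : ℝ) : EReal) := EReal.coe_le_coe_iff.mpr hreal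
    _ = ((R : ℝ) : EReal) + ((2 * lam * βn : ℝ) : EReal) * ((K : ℝ) : EReal) := by
        rw [EReal.coe_add, EReal.coe_mul]
    _ ≤ ((R : ℝ) : EReal) + ((2 * lam * βn : ℝ) : EReal) * (S - suppFn M q) :=
        add_le_add_right hmul _
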